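/- arXiv:1603.02971 — 5 statements merged into one kernel-verified Lean document; each statement's English description precedes it below -/
import Mathlib

section
/- Let S = (S, S̄) be a good bisection of a graph G with odd n vertices, and let u be one of its good vertices. Define the belief assignment b by b(x) = 1 for every x ∈ S∖{u} and b(x) = 0 for every x ∈ S̄∪{u}. Then: (1) in the truthful state, a majority of (n+1)/2 players have opinion 0; (2) u's best response in the truthful state is to play opinion 1; (3) after u's switch, no vertex with belief 1 has an incentive to adopt opinion 0. Hence b is a subvertable belief assignment and u is a swing vertex for b. -/
open Finset

/-- Number of neighbors of `x` in the set `A`. -/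
def nbrs {V : Type*} [DecidableEq V] (G : SimpleGraph V) [DecidableRel G.Adj]
    (x : V) (A : Finset V) : ℕ :=
  (A.filter (G.Adj x)).card

/-- Deficiency of `x` with respect to the bisection whose larger side is `S`. -/
def defc {V : Type*} [Fintype V] [DecidableEq V] (G : SimpleGraph V)
    [DecidableRel G.Adj] (S : Finset V) (x : V) : ℤ :=
  if x ∈ S then (nbrs G x S : ℤ) - (nbrs G x Sᶜ : ℤ)
  else (nbrs G x Sᶜ : ℤ) - (nbrs G x S : ℤ)

lemma sum_ind {V : Type*} [Fintype V] [DecidableEq V] (G : SimpleGraph V)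
    [DecidableRel G.Adj] (S : Finset V) (x : V) (p q : ℝ) (f : V → ℝ)
    (hf : ∀ j ∈ G.neighborFinset x, f j = if j ∈ S then p else q) :
    ∑ j ∈ G.neighborFinset x, f j = (nbrs G x S : ℝ) * p + (nbrs G x Sᶜ : ℝ) * q := by
  rw [Finset.sum_congr rfl hf, Finset.sum_ite, Finset.sum_const, Finset.sum_const]
  have h1 : (G.neighborFinset x).filter (· ∈ S) = S.filter (G.Adj x) := by
    ext j; simp [SimpleGraph.mem_neighborFinset, and_comm]
  have h2 : (G.neighborFinset x).filter (fun j => ¬ j ∈ S) = Sᶜ.filter (G.Adj x) := by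
    ext j; simp [SimpleGraph.mem_neighborFinset, and_comm]
  rw [h1, h2]
  simp [nbrs, nsmul_eq_mul]

/-- Given a good bisection `(S, S̄)` with good vertex `u`, the belief
assignment `b` with `b x = 1` for `x ∈ S \ {u}` and `b x = 0` otherwise satisfies:
(1) a majority of `(n+1)/2` players have belief (truthful opinion) 0;
(2) `u`'s best response in the truthful state is to play opinion 1;
(3) after `u`'s switch, no vertex with belief 1 has an incentive to adopt opinion 0.
Hence `b` is subvertable and `u` is a swing vertex for `b`. -/
theorem stmt3 {V : Type*} [Fintype V] [DecidableEq V]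
    (G : SimpleGraph V) [DecidableRel G.Adj]
    (hodd : Odd (Fintype.card V))
    (α : V → ℝ) (hα : ∀ v, 0 < α v ∧ α v < 1)
    (a : V → ℤ) (ha : ∀ v, a v = ⌊α v / (1 - α v)⌋)
    (S : Finset V) (hbis : 2 * S.card = Fintype.card V + 1)
    (hgood₁ : ∀ x ∈ S, -(a x) ≤ defc G S x)
    (u : V) (huS : u ∈ S) (hgood₂ : a u + 1 ≤ defc G S u)
    (b : V → ℝ) (hb : ∀ x, b x = if x ∈ S ∧ x ≠ u then 1 else 0)
    (cost : (V → ℝ) → V → ℝ)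
    (hcost : ∀ t i, cost t i =
      α i * |t i - b i| + (1 - α i) * ∑ j ∈ G.neighborFinset i, |t i - t j|) :
    2 * ((univ : Finset V).filter (fun x => b x = 0)).card = Fintype.card V + 1
    ∧ cost (Function.update b u 1) u < cost b u
    ∧ ∀ x, b x = 1 →
        cost (Function.update b u 1) x ≤
          cost (Function.update (Function.update b u 1) x 0) x := by
  have hbu : b u = 0 := by rw [hb]; simp
  refine ⟨?_, ?_, ?_⟩
  · have hset : (univ : Finset V).filter (fun x => b x = 0) = Sᶜ ∪ {u} := by
      ext x
      rw [mem_filter, hb x]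
      by_cases hxS : x ∈ S <;> by_cases hxu : x = u <;>
        simp [hxS, hxu, huS] <;> norm_num
    rw [hset, Finset.card_union_of_disjoint (by simp [huS]), Finset.card_compl,
      Finset.card_singleton]
    have hle : S.card ≤ Fintype.card V := Finset.card_le_univ S
    omega
  · -- part 2
    have hcb : cost b u = (1 - α u) * (nbrs G u S : ℝ) := by
      rw [hcost]
      rw [sum_ind G S u 1 0 _ (fun j hj => ?_)]
      · rw [hbu, sub_self, abs_zero]; ring
      · have hadj : G.Adj u j := by simpa using hj
        have hju : j ≠ u := hadj.ne'
        rw [hbu, hb j]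
        by_cases hjS : j ∈ S <;> simp [hjS, hju]
    have hcb' : cost (Function.update b u 1) u
        = α u + (1 - α u) * (nbrs G u Sᶜ : ℝ) := by
      rw [hcost]
      rw [sum_ind G S u 0 1 _ (fun j hj => ?_)]
      · rw [Function.update_self, hbu, show |(1:ℝ) - 0| = 1 by norm_num]; ring
      · have hadj : G.Adj u j := by simpa using hj
        have hju : j ≠ u := hadj.ne'
        rw [Function.update_self, Function.update_of_ne hju, hb j]
        by_cases hjS : j ∈ S <;> simp [hjS, hju]
    rw [hcb, hcb']
    have h1 : (0:ℝ) < 1 - α u := by linarith [(hα u).2]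
    have h2 : α u / (1 - α u) < (a u : ℝ) + 1 := by
      rw [ha]; exact Int.lt_floor_add_one _
    have h3 : (a u : ℝ) + 1 ≤ (nbrs G u S : ℝ) - (nbrs G u Sᶜ : ℝ) := by
      have := hgood₂
      rw [defc, if_pos huS] at this
      exact_mod_cast this
    have h4 : α u / (1 - α u) < (nbrs G u S : ℝ) - (nbrs G u Sᶜ : ℝ) := lt_of_lt_of_le h2 h3
    rw [div_lt_iff₀ h1] at h4
    nlinarith
  · -- part 3
    intro x hx
    have hxS : x ∈ S ∧ x ≠ u := by
      by_contra h
      rw [hb x, if_neg h] at hx; norm_num at hx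
    obtain ⟨hxS, hxu⟩ := hxS
    set t := Function.update b u 1 with ht
    have htval : ∀ j, t j = if j ∈ S then 1 else 0 := by
      intro j
      by_cases hju : j = u
      · subst hju; simp [ht, huS]
      · rw [ht, Function.update_of_ne hju, hb j]
        by_cases hjS : j ∈ S <;> simp [hjS, hju]
    have hc1 : cost t x = (1 - α x) * (nbrs G x Sᶜ : ℝ) := by
      rw [hcost]
      rw [sum_ind G S x 0 1 _ (fun j hj => ?_)]
      · rw [htval x, if_pos hxS, hb x, if_pos ⟨hxS, hxu⟩, sub_self, abs_zero]; ring
      · rw [htval x, if_pos hxS, htval j]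
        by_cases hjS : j ∈ S <;> simp [hjS]
    have hc2 : cost (Function.update t x 0) x
        = α x + (1 - α x) * (nbrs G x S : ℝ) := by
      rw [hcost]
      rw [sum_ind G S x 1 0 _ (fun j hj => ?_)]
      · rw [Function.update_self, hb x, if_pos ⟨hxS, hxu⟩,
          show |(0:ℝ) - 1| = 1 by norm_num]; ring
      · have hadj : G.Adj x j := by simpa using hj
        have hjx : j ≠ x := hadj.ne'
        rw [Function.update_self, Function.update_of_ne hjx, htval j]
        by_cases hjS : j ∈ S <;> simp [hjS]
    rw [hc1, hc2]
    have h1 : (0:ℝ) < 1 - α x := by linarith [(hα x).2]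
    have h2 : (a x : ℝ) ≤ α x / (1 - α x) := by
      rw [ha]
      exact Int.floor_le _
    have h3 : (nbrs G x Sᶜ : ℝ) - (nbrs G x S : ℝ) ≤ (a x : ℝ) := by
      have := hgood₁ x hxS
      rw [defc, if_pos hxS] at this
      have : (nbrs G x Sᶜ : ℤ) - (nbrs G x S : ℤ) ≤ a x := by linarith
      exact_mod_cast this
    have h4 : (nbrs G x Sᶜ : ℝ) - (nbrs G x S : ℝ) ≤ α x / (1 - α x) := le_trans h3 h2
    rw [le_div_iff₀ h1] at h4
    nlinarith
end

section
/- Let S = (S, S̄) be a bisection of minimal potential of a graph G. Then for every x ∈ S and y ∈ S̄, it holds that def_S(x) + def_S(y) + 2·W(x,y) ≥ a_x - a_y. -/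
open Finset

/-- Number of edges between the (disjoint) sets `A` and `B` (i.e. `W(A, B)`). -/
def ew {V : Type*} [DecidableEq V] (G : SimpleGraph V) [DecidableRel G.Adj]
    (A B : Finset V) : ℕ :=
  ∑ x ∈ A, nbrs G x B

/-- Potential of the bisection `(S, S̄)`:
`Φ(S,S̄) = W(S,S̄) + (1/2)(Σ_{x∈S} a_x − Σ_{y∈S̄} a_y)`. -/
def pot {V : Type*} [Fintype V] [DecidableEq V] (G : SimpleGraph V)
    [DecidableRel G.Adj] (a : V → ℕ) (S : Finset V) : ℚ :=
  (ew G S Sᶜ : ℚ) + (∑ x ∈ S, (a x : ℚ) - ∑ y ∈ Sᶜ, (a y : ℚ)) / 2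

/-- Rank of `u` with respect to the bisection `S`:
`rank_S(u) = ⌈(a_u + 1 − def_S(u)) / 2⌉`. -/
def rk {V : Type*} [Fintype V] [DecidableEq V] (G : SimpleGraph V)
    [DecidableRel G.Adj] (a : V → ℕ) (S : Finset V) (u : V) : ℤ :=
  ⌈((((a u : ℤ) + 1 - defc G S u : ℤ) : ℚ)) / 2⌉

/-- A vertex `u` is stubborn if `a_u ≥ min {d(u), n − d(u) − 1}`. -/
def Stubborn {V : Type*} [Fintype V] [DecidableEq V] (G : SimpleGraph V)
    [DecidableRel G.Adj] (a : V → ℕ) (u : V) : Prop :=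
  min (G.degree u : ℤ) ((Fintype.card V : ℤ) - (G.degree u : ℤ) - 1) ≤ (a u : ℤ)

/-- A `u`-pair `(A, B)` for the bisection `S`:
if `u ∈ S`, `A ⊆ S ∩ N̄(u)`, `B ⊆ S̄ ∩ N(u)` with `|A| = |B| = rank_S(u)`;
if `u ∈ S̄`, `A ⊆ S ∩ N(u)`, `B ⊆ S̄ ∩ N̄(u)` with `|A| = rank_S(u)` and
`|B| = rank_S(u) − 1` (the vertex `u` itself is not moved). -/
def IsUPair {V : Type*} [Fintype V] [DecidableEq V] (G : SimpleGraph V)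
    [DecidableRel G.Adj] (a : V → ℕ) (S : Finset V) (u : V)
    (A B : Finset V) : Prop :=
  if u ∈ S then
    A ⊆ S ∧ (∀ v ∈ A, ¬ G.Adj u v) ∧ u ∉ A ∧
    B ⊆ Sᶜ ∧ (∀ v ∈ B, G.Adj u v) ∧
    (A.card : ℤ) = rk G a S u ∧ (B.card : ℤ) = rk G a S u
  else
    A ⊆ S ∧ (∀ v ∈ A, G.Adj u v) ∧
    B ⊆ Sᶜ ∧ (∀ v ∈ B, ¬ G.Adj u v) ∧ u ∉ B ∧
    (A.card : ℤ) = rk G a S u ∧ (B.card : ℤ) = rk G a S u - 1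

/-- The larger side of the bisection associated with a `u`-pair `(A, B)`:
`S ∖ A ∪ B` if `u ∈ S`, and `S̄ ∖ B ∪ A` if `u ∈ S̄`. -/
def assoc {V : Type*} [Fintype V] [DecidableEq V] (S : Finset V) (u : V)
    (A B : Finset V) : Finset V :=
  if u ∈ S then (S \ A) ∪ B else (Sᶜ \ B) ∪ A

lemma nbrs_castQ {V : Type*} [DecidableEq V] (G : SimpleGraph V) [DecidableRel G.Adj]
    (v : V) (B : Finset V) :
    (nbrs G v B : ℚ) = ∑ w ∈ B, (if G.Adj v w then (1:ℚ) else 0) := by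
  rw [nbrs, Finset.card_filter]
  push_cast
  simp

lemma ew_castQ {V : Type*} [DecidableEq V] (G : SimpleGraph V) [DecidableRel G.Adj]
    (A B : Finset V) :
    (ew G A B : ℚ) = ∑ v ∈ A, ∑ w ∈ B, (if G.Adj v w then (1:ℚ) else 0) := by
  rw [ew]
  push_cast
  exact Finset.sum_congr rfl fun v _ => nbrs_castQ G v B

/-- Lemma 2: If the bisection `S` has minimal potential, then for
every `x ∈ S` and `y ∈ S̄`, `def_S(x) + def_S(y) + 2·W(x,y) ≥ a_x − a_y`. -/
theorem stmt4 {V : Type*} [Fintype V] [DecidableEq V]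
    (G : SimpleGraph V) [DecidableRel G.Adj] (a : V → ℕ)
    (hodd : Odd (Fintype.card V))
    (S : Finset V) (hbis : 2 * S.card = Fintype.card V + 1)
    (hmin : ∀ x ∈ S, ∀ y ∉ S, pot G a S ≤ pot G a (insert y (S.erase x)))
    (x y : V) (hx : x ∈ S) (hy : y ∉ S) :
    defc G S x + defc G S y + 2 * (if G.Adj x y then 1 else 0) ≥ (a x : ℤ) - (a y : ℤ) := by
  have hxy : x ≠ y := fun h => hy (h ▸ hx)
  have hyS' : y ∉ S.erase x := fun h' => hy (Finset.mem_of_mem_erase h')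
  have hxE : x ∉ Sᶜ.erase y := fun h' => (Finset.mem_compl.mp (Finset.mem_of_mem_erase h')) hx
  have hyc : y ∈ Sᶜ := Finset.mem_compl.mpr hy
  have h := hmin x hx y hy
  have hcompl : (insert y (S.erase x))ᶜ = insert x (Sᶜ.erase y) := by
    rw [Finset.compl_insert, Finset.compl_erase, Finset.erase_insert_of_ne hxy]
  rw [pot, pot, hcompl, ew_castQ, ew_castQ] at h
  simp only [Finset.sum_insert hyS', Finset.sum_insert hxE,
    Finset.sum_erase_eq_sub hx, Finset.sum_erase_eq_sub hyc,
    Finset.sum_add_distrib, Finset.sum_sub_distrib] at h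
  have e1 : ∀ (u : V) (A : Finset V),
      (∑ v ∈ A, (if G.Adj v u then (1:ℚ) else 0)) = (nbrs G u A : ℚ) := by
    intro u A
    rw [nbrs_castQ]
    exact Finset.sum_congr rfl fun v _ => if_congr (G.adj_comm v u) rfl rfl
  simp only [e1, ← nbrs_castQ, SimpleGraph.irrefl, if_false] at h
  simp only [show G.Adj y x ↔ G.Adj x y from G.adj_comm y x] at h
  simp only [defc, if_pos hx, if_neg hy, ge_iff_le]
  rw [← @Int.cast_le ℚ]
  push_cast
  by_cases hadj : G.Adj x y <;> simp only [hadj, if_true, if_false] at h ⊢ <;> linarith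
end

section
/- Let S be a bisection of G, u a vertex, (A_u, B_u) a u-pair for S, and T the bisection associated to (A_u, B_u). Then def_T(u) ≥ a_u + 1. -/
open Finset

set_option linter.unusedSectionVars false
section Aux
variable {V : Type*} [Fintype V] [DecidableEq V] (G : SimpleGraph V) [DecidableRel G.Adj]

lemma nbrs_union (x : V) {A B : Finset V} (h : Disjoint A B) :
    nbrs G x (A ∪ B) = nbrs G x A + nbrs G x B := by
  unfold nbrs
  rw [Finset.filter_union, Finset.card_union_of_disjoint (Finset.disjoint_filter_filter h)]

lemma nbrs_compl (x : V) (S : Finset V) :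
    (nbrs G x Sᶜ : ℤ) = nbrs G x Finset.univ - nbrs G x S := by
  have h : nbrs G x Finset.univ = nbrs G x Sᶜ + nbrs G x S := by
    unfold nbrs
    rw [← Finset.card_union_of_disjoint (Finset.disjoint_filter_filter disjoint_compl_left),
      ← Finset.filter_union]
    rw [show Sᶜ ∪ S = (Finset.univ : Finset V) by rw [Finset.union_comm]; exact Finset.union_compl S]
  omega

lemma nbrs_sdiff (x : V) {A S : Finset V} (h : A ⊆ S) :
    (nbrs G x (S \ A) : ℤ) = nbrs G x S - nbrs G x A := by
  have hfs : (S \ A).filter (G.Adj x) = S.filter (G.Adj x) \ A.filter (G.Adj x) := by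
    ext v
    simp only [Finset.mem_filter, Finset.mem_sdiff]
    tauto
  have hsub := Finset.filter_subset_filter (G.Adj x) h
  unfold nbrs
  rw [hfs, Finset.card_sdiff_of_subset hsub]
  have := Finset.card_le_card hsub
  omega

lemma nbrs_eq_zero (x : V) {A : Finset V} (h : ∀ v ∈ A, ¬ G.Adj x v) :
    nbrs G x A = 0 := by
  unfold nbrs
  rw [Finset.filter_false_of_mem h, Finset.card_empty]

lemma nbrs_eq_card (x : V) {A : Finset V} (h : ∀ v ∈ A, G.Adj x v) :
    nbrs G x A = A.card := by
  unfold nbrs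
  rw [Finset.filter_true_of_mem h]

lemma two_ceil (q : ℤ) : q ≤ 2 * ⌈((q : ℚ)) / 2⌉ := by
  have h := Int.le_ceil ((q : ℚ) / 2)
  have : (q : ℚ) ≤ 2 * (⌈((q : ℚ)) / 2⌉ : ℚ) := by linarith
  exact_mod_cast this

end Aux

/-- Lemma 3: If `(A_u, B_u)` is a `u`-pair for the bisection `S`
and `T` is the associated bisection, then `def_T(u) ≥ a_u + 1`. -/
theorem stmt6 {V : Type*} [Fintype V] [DecidableEq V]
    (G : SimpleGraph V) [DecidableRel G.Adj] (a : V → ℕ)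
    (hodd : Odd (Fintype.card V))
    (S : Finset V) (hbis : 2 * S.card = Fintype.card V + 1)
    (u : V) (A B : Finset V) (hpair : IsUPair G a S u A B) :
    (a u : ℤ) + 1 ≤ defc G (assoc S u A B) u := by
  set r := rk G a S u with hrdef
  have hceil : (a u : ℤ) + 1 - defc G S u ≤ 2 * r := by
    have := two_ceil ((a u : ℤ) + 1 - defc G S u)
    simpa [hrdef, rk] using this
  by_cases hu : u ∈ S
  · simp only [IsUPair, if_pos hu] at hpair
    obtain ⟨hAS, hAn, huA, hBS, hBa, hAc, hBc⟩ := hpair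
    have hT : assoc S u A B = (S \ A) ∪ B := by simp [assoc, hu]
    have huT : u ∈ (S \ A) ∪ B :=
      Finset.mem_union_left _ (Finset.mem_sdiff.2 ⟨hu, huA⟩)
    have hdisj : Disjoint (S \ A) B :=
      Disjoint.mono (Finset.sdiff_subset) hBS (disjoint_compl_right)
    have hnT : (nbrs G u ((S \ A) ∪ B) : ℤ) = nbrs G u S + r := by
      rw [nbrs_union G u hdisj]
      push_cast
      rw [nbrs_sdiff G u hAS, nbrs_eq_zero G u hAn, nbrs_eq_card G u hBa]
      push_cast
      omega
    have hdefS : defc G S u = 2 * (nbrs G u S : ℤ) - nbrs G u Finset.univ := by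
      rw [defc, if_pos hu, nbrs_compl]; ring
    have hdefT : defc G (assoc S u A B) u
        = 2 * (nbrs G u ((S \ A) ∪ B) : ℤ) - nbrs G u Finset.univ := by
      rw [hT, defc, if_pos huT, nbrs_compl]; ring
    rw [hdefT, hnT]
    omega
  · simp only [IsUPair, if_neg hu] at hpair
    obtain ⟨hAS, hAa, hBS, hBn, huB, hAc, hBc⟩ := hpair
    have hT : assoc S u A B = (Sᶜ \ B) ∪ A := by simp [assoc, hu]
    have huT : u ∈ (Sᶜ \ B) ∪ A :=
      Finset.mem_union_left _ (Finset.mem_sdiff.2 ⟨Finset.mem_compl.2 hu, huB⟩)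
    have hdisj : Disjoint (Sᶜ \ B) A :=
      Disjoint.mono (Finset.sdiff_subset) hAS (disjoint_compl_left)
    have hnT : (nbrs G u ((Sᶜ \ B) ∪ A) : ℤ)
        = (nbrs G u Finset.univ : ℤ) - nbrs G u S + r := by
      rw [nbrs_union G u hdisj]
      push_cast
      rw [nbrs_sdiff G u hBS, nbrs_compl, nbrs_eq_zero G u hBn, nbrs_eq_card G u hAa]
      push_cast
      omega
    have hdefS : defc G S u = (nbrs G u Finset.univ : ℤ) - 2 * nbrs G u S := by
      rw [defc, if_neg hu, nbrs_compl]; ring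
    have hdefT : defc G (assoc S u A B) u
        = 2 * (nbrs G u ((Sᶜ \ B) ∪ A) : ℤ) - nbrs G u Finset.univ := by
      rw [hT, defc, if_pos huT, nbrs_compl]; ring
    rw [hdefT, hnT]
    omega
end

section
/- Let S be a bisection, u a vertex of minimum rank ℓ in S̄, and T the bisection associated with a u-pair (A_u,B_u). If y is an obstruction for T, then def_S(y) ≤ −a_y + 2·rank_S(u) − 3. -/
open Finset

lemma nbrs_union_aux {V : Type*} [DecidableEq V] (G : SimpleGraph V)
    [DecidableRel G.Adj] (x : V) {X Y : Finset V} (h : Disjoint X Y) :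
    nbrs G x (X ∪ Y) = nbrs G x X + nbrs G x Y := by
  unfold nbrs
  rw [filter_union, card_union_of_disjoint
    (h.mono (filter_subset _ _) (filter_subset _ _))]

lemma nbrs_sdiff_add_aux {V : Type*} [DecidableEq V] (G : SimpleGraph V)
    [DecidableRel G.Adj] (x : V) {X Y : Finset V} (h : Y ⊆ X) :
    nbrs G x (X \ Y) + nbrs G x Y = nbrs G x X := by
  rw [← nbrs_union_aux G x sdiff_disjoint, sdiff_union_of_subset h]

lemma nbrs_le_card_aux {V : Type*} [DecidableEq V] (G : SimpleGraph V)
    [DecidableRel G.Adj] (x : V) (X : Finset V) : nbrs G x X ≤ X.card :=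
  card_le_card (filter_subset _ _)

lemma nbrs_add_compl_aux {V : Type*} [Fintype V] [DecidableEq V] (G : SimpleGraph V)
    [DecidableRel G.Adj] (x : V) (S : Finset V) :
    nbrs G x S + nbrs G x Sᶜ = G.degree x := by
  unfold nbrs
  rw [← card_union_of_disjoint (disjoint_filter_filter disjoint_compl_right),
    ← filter_union, union_compl, ← SimpleGraph.neighborFinset_eq_filter,
    SimpleGraph.card_neighborFinset_eq_degree]

lemma stub_no_obs_aux {V : Type*} [Fintype V] [DecidableEq V] (G : SimpleGraph V)
    [DecidableRel G.Adj] (a : V → ℕ) (T : Finset V)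
    (hT : 2 * T.card = Fintype.card V + 1) (y : V) (hy : y ∈ T)
    (hst : Stubborn G a y) : -(a y : ℤ) ≤ defc G T y := by
  have h1 := nbrs_add_compl_aux G y T
  have h2 : nbrs G y Tᶜ ≤ Tᶜ.card := nbrs_le_card_aux G y Tᶜ
  have h3 := card_add_card_compl T
  rw [defc, if_pos hy]
  unfold Stubborn at hst
  omega

/-- Lemma 7, first part: Let `u ∈ S̄` be a non-stubborn vertex of
minimum rank for the bisection `S` and `T` the bisection associated with a
`u`-pair `(A_u, B_u)`. If `y` is an obstruction for `T`, then
`def_S(y) ≤ −a_y + 2·rank_S(u) − 3`. -/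
theorem stmt11 {V : Type*} [Fintype V] [DecidableEq V]
    (G : SimpleGraph V) [DecidableRel G.Adj] (a : V → ℕ)
    (hodd : Odd (Fintype.card V))
    (S : Finset V) (hbis : 2 * S.card = Fintype.card V + 1)
    (u : V) (hu : u ∉ S) (hns : ¬ Stubborn G a u)
    (hminrank : ∀ v : V, ¬ Stubborn G a v → rk G a S u ≤ rk G a S v)
    (A B : Finset V) (hpair : IsUPair G a S u A B)
    (y : V) (hyT : y ∈ assoc S u A B)
    (hobs : defc G (assoc S u A B) y < -(a y : ℤ)) :
    defc G S y ≤ -(a y : ℤ) + 2 * rk G a S u - 3 := by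
  rw [IsUPair, if_neg hu] at hpair
  obtain ⟨hAS, hAadj, hBSc, hBnadj, huB, hcardA, hcardB⟩ := hpair
  rw [assoc, if_neg hu] at hyT hobs
  have hdisj1 : Disjoint (Sᶜ \ B) A := by
    rw [disjoint_left]; intro v hv hvA
    exact (mem_compl.mp (mem_sdiff.mp hv).1) (hAS hvA)
  have hdisj2 : Disjoint (S \ A) B := by
    rw [disjoint_left]; intro v hv hvB
    exact (mem_compl.mp (hBSc hvB)) (mem_sdiff.mp hv).1
  have hTc : ((Sᶜ \ B) ∪ A)ᶜ = (S \ A) ∪ B := by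
    ext v
    have h1 : v ∈ A → v ∈ S := fun h => hAS h
    have h2 : v ∈ B → v ∉ S := fun h => mem_compl.mp (hBSc h)
    simp only [mem_compl, mem_union, mem_sdiff, mem_compl]
    tauto
  have e1 : nbrs G y ((Sᶜ \ B) ∪ A) + nbrs G y B = nbrs G y Sᶜ + nbrs G y A := by
    rw [nbrs_union_aux G y hdisj1]
    have := nbrs_sdiff_add_aux G y hBSc
    omega
  have e2 : nbrs G y ((S \ A) ∪ B) + nbrs G y A = nbrs G y S + nbrs G y B := by
    rw [nbrs_union_aux G y hdisj2]
    have := nbrs_sdiff_add_aux G y hAS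
    omega
  have hBle : nbrs G y B ≤ B.card := nbrs_le_card_aux G y B
  rw [defc, if_pos hyT, hTc] at hobs
  rcases mem_union.mp hyT with hy1 | hy2
  · -- y ∈ Sᶜ \ B : prove the bound directly
    have hyS : y ∉ S := mem_compl.mp (mem_sdiff.mp hy1).1
    rw [defc, if_neg hyS]
    omega
  · -- y ∈ A ⊆ S : derive a contradiction
    have hyS : y ∈ S := hAS hy2
    exfalso
    by_cases hst : Stubborn G a y
    · have hTcard : 2 * ((Sᶜ \ B) ∪ A).card = Fintype.card V + 1 := by
        rw [card_union_of_disjoint hdisj1, card_sdiff_of_subset hBSc]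
        have h1 := card_compl S
        have h2 : B.card ≤ Sᶜ.card := card_le_card hBSc
        have h3 : S.card ≤ Fintype.card V := card_le_univ S
        omega
      have := stub_no_obs_aux G a _ hTcard y hyT hst
      rw [defc, if_pos hyT, hTc] at this
      omega
    · have hrk := hminrank y hst
      have hkey : (a y : ℤ) + 1 - defc G S y ≤ 2 * rk G a S u - 2 := by
        rw [defc, if_pos hyS]
        omega
      have hle : rk G a S y ≤ rk G a S u - 1 := by
        rw [rk, Int.ceil_le]
        have h2 : (((a y : ℤ) + 1 - defc G S y : ℤ) : ℚ)
            ≤ ((2 * rk G a S u - 2 : ℤ) : ℚ) := by exact_mod_cast hkey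
        push_cast at h2 ⊢
        linarith
      omega
end

section
/- Let G be a graph with an odd number of vertices in which at least one vertex is non-stubborn. Then G admits a good bisection, i.e., a bisection S=(S,S̄) such that def_S(x) ≥ −a_x for every x ∈ S and there exists u ∈ S with def_S(u) ≥ a_u + 1. Consequently, G admits a subvertable belief assignment with a swing vertex. -/
open Finset

section Aux

variable {V : Type*} [Fintype V] [DecidableEq V] (G : SimpleGraph V) [DecidableRel G.Adj]

lemma nbrs_insert (x y : V) (A : Finset V) (hy : y ∉ A) :
    nbrs G x (insert y A) = nbrs G x A + if G.Adj x y then 1 else 0 := by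
  unfold nbrs
  rw [filter_insert]
  split
  · rw [card_insert_of_notMem (fun h => hy (mem_filter.1 h).1)]
  · simp

lemma nbrs_insert_self (x : V) (A : Finset V) (hx : x ∉ A) :
    nbrs G x (insert x A) = nbrs G x A := by
  rw [nbrs_insert G x x A hx, if_neg (G.irrefl), add_zero]

lemma nbrs_erase_self (x : V) (A : Finset V) :
    nbrs G x (A.erase x) = nbrs G x A := by
  unfold nbrs
  rw [Finset.filter_erase, Finset.erase_eq_of_notMem]
  intro h
  exact G.irrefl (mem_filter.1 h).2

lemma nbrs_add_compl (x : V) (A : Finset V) :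
    nbrs G x A + nbrs G x Aᶜ = G.degree x := by
  unfold nbrs
  rw [← card_union_of_disjoint (disjoint_filter_filter disjoint_compl_right),
    ← filter_union, union_compl]
  simp [SimpleGraph.degree, SimpleGraph.neighborFinset_eq_filter]

lemma nbrs_eq_sum (x : V) (A : Finset V) :
    (nbrs G x A : ℤ) = ∑ y ∈ A, if G.Adj x y then (1:ℤ) else 0 := by
  unfold nbrs
  rw [Finset.card_filter]
  push_cast
  rfl

/-- The cut value of a set `S` (number of edges leaving `S`), as an integer. -/
def cutI (S : Finset V) : ℤ := ∑ x ∈ S, (nbrs G x Sᶜ : ℤ)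

lemma cut_symm (A B : Finset V) :
    (∑ x ∈ A, (nbrs G x B : ℤ)) = ∑ x ∈ B, (nbrs G x A : ℤ) := by
  simp only [nbrs_eq_sum]
  rw [Finset.sum_comm]
  apply Finset.sum_congr rfl
  intro x _
  apply Finset.sum_congr rfl
  intro y _
  simp [G.adj_comm x y]

lemma defc_flip (S : Finset V) (x : V) (hx : x ∈ S) :
    defc G (insert x Sᶜ) x = - defc G S x := by
  have hxc : x ∉ Sᶜ := by simp [hx]
  have hT : (insert x Sᶜ)ᶜ = S.erase x := by
    rw [compl_insert, compl_compl]
  rw [defc, if_pos (mem_insert_self x Sᶜ), hT, defc, if_pos hx,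
    nbrs_insert_self G x Sᶜ hxc, nbrs_erase_self]
  ring

lemma cutI_flip (S : Finset V) (x₀ : V) (hx : x₀ ∈ S) :
    cutI G (insert x₀ Sᶜ) = cutI G S + defc G S x₀ := by
  have hxc : x₀ ∉ Sᶜ := by simp [hx]
  have hT : (insert x₀ Sᶜ)ᶜ = S.erase x₀ := by
    rw [compl_insert, compl_compl]
  have herase : ∀ y : V, (nbrs G y (S.erase x₀) : ℤ)
      = (nbrs G y S : ℤ) - if G.Adj y x₀ then 1 else 0 := by
    intro y
    have : nbrs G y S = nbrs G y (S.erase x₀) + if G.Adj y x₀ then 1 else 0 := by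
      conv_lhs => rw [← Finset.insert_erase hx]
      exact nbrs_insert G y x₀ (S.erase x₀) (notMem_erase _ _)
    rw [this]; push_cast; ring
  rw [cutI, hT, Finset.sum_insert hxc]
  have h1 : (∑ x ∈ Sᶜ, (nbrs G x (S.erase x₀) : ℤ))
      = (∑ x ∈ Sᶜ, (nbrs G x S : ℤ)) - (nbrs G x₀ Sᶜ : ℤ) := by
    have h2 : (nbrs G x₀ Sᶜ : ℤ) = ∑ x ∈ Sᶜ, if G.Adj x x₀ then (1:ℤ) else 0 := by
      rw [nbrs_eq_sum]
      exact Finset.sum_congr rfl fun y _ => by simp [G.adj_comm]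
    rw [h2, ← Finset.sum_sub_distrib]
    exact Finset.sum_congr rfl fun y _ => herase y
  rw [h1, cut_symm G Sᶜ S, nbrs_erase_self, defc, if_pos hx, cutI]
  ring

end Aux

section Main

variable {V : Type*} [Fintype V] [DecidableEq V] (G : SimpleGraph V) [DecidableRel G.Adj]

lemma filter_nbhd (x : V) (A : Finset V) :
    (G.neighborFinset x).filter (fun j => j ∈ A) = A.filter (G.Adj x) := by
  ext j
  simp [SimpleGraph.mem_neighborFinset, and_comm]

lemma good_bisection (k : ℕ) (hcard : Fintype.card V = 2*k+1)
    (a : V → ℤ) (ha0 : ∀ x, 0 ≤ a x) (v : V)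
    (hv : a v < min (G.degree v : ℤ) ((Fintype.card V : ℤ) - (G.degree v : ℤ) - 1)) :
    ∃ S : Finset V, S.card = k + 1 ∧
      (∀ x ∈ S, -(a x) ≤ defc G S x) ∧ ∃ u ∈ S, a u + 1 ≤ defc G S u := by
  classical
  rw [lt_min_iff] at hv
  obtain ⟨hv1, hv2⟩ := hv
  set d := G.degree v with hd
  -- construct an initial member S₀ of the family B
  obtain ⟨N', hN'sub, hN'card⟩ :=
    Finset.exists_subset_card_eq (s := G.neighborFinset v) (n := min d k) (by
      rw [G.card_neighborFinset_eq_degree]; exact min_le_left _ _)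
  have hvN' : v ∉ N' := fun h => G.irrefl ((G.mem_neighborFinset v v).1 (hN'sub h))
  have hs1card : (insert v N').card = min d k + 1 := by
    rw [card_insert_of_notMem hvN', hN'card]
  obtain ⟨S₀, hS₀sub, hS₀card⟩ :=
    Finset.exists_superset_card_eq (s := insert v N') (n := k+1)
      (by rw [hs1card]; omega) (by omega)
  have hvS₀ : v ∈ S₀ := hS₀sub (mem_insert_self v N')
  have hS₀def : a v + 1 ≤ defc G S₀ v := by
    have hsub : N' ⊆ S₀.filter (G.Adj v) := by
      intro y hy
      exact mem_filter.2 ⟨hS₀sub (mem_insert_of_mem hy),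
        (G.mem_neighborFinset v y).1 (hN'sub hy)⟩
    have h1 : min d k ≤ nbrs G v S₀ := by
      rw [← hN'card]; exact card_le_card hsub
    have h2 : nbrs G v S₀ + nbrs G v S₀ᶜ = d := nbrs_add_compl G v S₀
    rw [defc, if_pos hvS₀]
    have hc : (Fintype.card V : ℤ) = 2*(k:ℤ)+1 := by exact_mod_cast congrArg Nat.cast hcard
    rcases le_total d k with h | h
    · have : min d k = d := min_eq_left h
      omega
    · have : min d k = k := min_eq_right h
      omega
  -- the family of bisections with a witness
  set B : Finset (Finset V) :=
    univ.filter (fun S : Finset V =>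
      S.card = k+1 ∧ ∃ u ∈ S, a u + 1 ≤ defc G S u) with hB
  have hBne : B.Nonempty := ⟨S₀, by
    rw [hB, mem_filter]
    exact ⟨mem_univ _, hS₀card, v, hvS₀, hS₀def⟩⟩
  obtain ⟨S, hSB, hmin⟩ := Finset.exists_min_image B (cutI G) hBne
  rw [hB, mem_filter] at hSB
  obtain ⟨-, hScard, hwit⟩ := hSB
  refine ⟨S, hScard, ?_, hwit⟩
  intro x hxS
  by_contra hcon
  push_neg at hcon
  have hxdef : defc G S x ≤ -(a x) - 1 := by omega
  have hxc : x ∉ Sᶜ := by simp [hxS]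
  have hTcard : (insert x Sᶜ).card = k + 1 := by
    rw [card_insert_of_notMem hxc, card_compl, hScard, hcard]
    omega
  have hTB : insert x Sᶜ ∈ B := by
    rw [hB, mem_filter]
    refine ⟨mem_univ _, hTcard, x, mem_insert_self x Sᶜ, ?_⟩
    rw [defc_flip G S x hxS]
    have := ha0 x
    omega
  have hle := hmin _ hTB
  rw [cutI_flip G S x hxS] at hle
  have := ha0 x
  omega

end Main

/-- Main Theorem: If `G` has an odd number of vertices and at least
one non-stubborn vertex, then `G` admits a good bisection (a bisection `S` with
`def_S(x) ≥ −a_x` for every `x ∈ S` and some `u ∈ S` with `def_S(u) ≥ a_u + 1`).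
Consequently, `G` admits a subvertable belief assignment with a swing vertex:
a belief assignment `b` with a majority of `(n+1)/2` zeros and a vertex `u` with
`b u = 0` whose best response in the truthful state is opinion 1, after which no
vertex with belief 1 has an incentive to switch to opinion 0. -/
theorem stmt18 {V : Type*} [Fintype V] [DecidableEq V]
    (G : SimpleGraph V) [DecidableRel G.Adj]
    (hodd : Odd (Fintype.card V))
    (α : V → ℝ) (hα : ∀ v, 0 < α v ∧ α v < 1)
    (a : V → ℤ) (ha : ∀ v, a v = ⌊α v / (1 - α v)⌋)
    (hns : ∃ v : V, a v <
      min (G.degree v : ℤ) ((Fintype.card V : ℤ) - (G.degree v : ℤ) - 1))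
    (cost : (V → ℝ) → (V → ℝ) → V → ℝ)
    (hcost : ∀ b s i, cost b s i =
      α i * |s i - b i| + (1 - α i) * ∑ j ∈ G.neighborFinset i, |s i - s j|) :
    (∃ S : Finset V, 2 * S.card = Fintype.card V + 1 ∧
      (∀ x ∈ S, -(a x) ≤ defc G S x) ∧ ∃ u ∈ S, a u + 1 ≤ defc G S u) ∧
    (∃ (b : V → ℝ) (u : V),
      (∀ j, b j = 0 ∨ b j = 1) ∧ b u = 0 ∧
      2 * ((univ : Finset V).filter (fun x => b x = 0)).card = Fintype.card V + 1 ∧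
      cost b (Function.update b u 1) u < cost b b u ∧
      ∀ x, b x = 1 →
        cost b (Function.update b u 1) x ≤
          cost b (Function.update (Function.update b u 1) x 0) x) := by
  classical
  obtain ⟨k, hk⟩ := hodd
  have ha0 : ∀ x, 0 ≤ a x := by
    intro x
    rw [ha x]
    exact Int.floor_nonneg.2 (div_nonneg (le_of_lt (hα x).1) (by linarith [(hα x).2]))
  obtain ⟨v, hv⟩ := hns
  obtain ⟨S, hScard, hgood, u, huS, hudef⟩ := good_bisection G k hk a ha0 v hv
  have hpart1 : ∃ S : Finset V, 2 * S.card = Fintype.card V + 1 ∧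
      (∀ x ∈ S, -(a x) ≤ defc G S x) ∧ ∃ u ∈ S, a u + 1 ≤ defc G S u :=
    ⟨S, by rw [hScard, hk]; ring, hgood, u, huS, hudef⟩
  refine ⟨hpart1, ?_⟩
  -- part 2
  set Z : Finset V := insert u Sᶜ with hZ
  have huSc : u ∉ Sᶜ := by simp [huS]
  have hZcard : Z.card = k + 1 := by
    rw [hZ, card_insert_of_notMem huSc, card_compl, hScard, hk]
    omega
  set b : V → ℝ := fun x => if x ∈ Z then 0 else 1 with hb
  have hb01 : ∀ j, b j = 0 ∨ b j = 1 := by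
    intro j
    rw [hb]
    by_cases h : j ∈ Z <;> simp [h]
  have hbu : b u = 0 := by rw [hb]; simp [hZ]
  have hbZ : ∀ j, j ∈ Z → b j = 0 := fun j h => by rw [hb]; simp [h]
  have hbZ' : ∀ j, j ∉ Z → b j = 1 := fun j h => by rw [hb]; simp [h]
  -- membership characterizations
  have hmemZ : ∀ j, j ≠ u → (j ∈ Z ↔ j ∈ Sᶜ) := by
    intro j hj
    rw [hZ]
    simp [Finset.mem_insert, hj]
  refine ⟨b, u, hb01, hbu, ?_, ?_, ?_⟩
  · -- count of zeros
    have : (univ : Finset V).filter (fun x => b x = 0) = Z := by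
      ext j
      simp only [mem_filter, mem_univ, true_and]
      constructor
      · intro h
        by_contra hc
        rw [hbZ' j hc] at h
        exact one_ne_zero h
      · exact hbZ j
    rw [this, hZcard, hk]
    ring
  · -- the swing move is strictly improving for u
    set s : V → ℝ := Function.update b u 1 with hs
    have hsu : s u = 1 := Function.update_self u 1 b
    have hsum1 : ∑ j ∈ G.neighborFinset u, |s u - s j| = (nbrs G u Sᶜ : ℝ) := by
      have : ∀ j ∈ G.neighborFinset u, |s u - s j| = if j ∈ Sᶜ then 1 else 0 := by
        intro j hj
        have hju : j ≠ u := fun h => G.irrefl (h ▸ (G.mem_neighborFinset u j).1 hj)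
        rw [hsu, hs, Function.update_of_ne hju]
        by_cases hjc : j ∈ Sᶜ
        · rw [if_pos hjc, hbZ j ((hmemZ j hju).2 hjc)]; norm_num
        · rw [if_neg hjc, hbZ' j (fun h => hjc ((hmemZ j hju).1 h))]; norm_num
      rw [Finset.sum_congr rfl this, Finset.sum_boole, filter_nbhd]
      rfl
    have hsum0 : ∑ j ∈ G.neighborFinset u, |b u - b j| = (nbrs G u S : ℝ) := by
      have : ∀ j ∈ G.neighborFinset u, |b u - b j| = if j ∈ S then 1 else 0 := by
        intro j hj
        have hju : j ≠ u := fun h => G.irrefl (h ▸ (G.mem_neighborFinset u j).1 hj)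
        rw [hbu]
        by_cases hjs : j ∈ S
        · rw [if_pos hjs, hbZ' j (fun h => (mem_compl.1 ((hmemZ j hju).1 h)) hjs)]
          norm_num
        · rw [if_neg hjs, hbZ j ((hmemZ j hju).2 (mem_compl.2 hjs))]
          norm_num
      rw [Finset.sum_congr rfl this, Finset.sum_boole, filter_nbhd]
      rfl
    rw [hcost, hcost, hsum1, hsum0, hsu, hbu]
    norm_num
    have h1α : (0:ℝ) < 1 - α u := by linarith [(hα u).2]
    have hfl : (α u / (1 - α u)) < ((nbrs G u S : ℤ) - (nbrs G u Sᶜ : ℤ) : ℝ) := by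
      have h2 : ⌊α u / (1 - α u)⌋ < (nbrs G u S : ℤ) - (nbrs G u Sᶜ : ℤ) := by
        rw [← ha u]
        have : defc G S u = (nbrs G u S : ℤ) - (nbrs G u Sᶜ : ℤ) := by
          rw [defc, if_pos huS]
        omega
      exact_mod_cast Int.floor_lt.1 h2
    push_cast at hfl
    have hkey := mul_lt_mul_of_pos_left hfl h1α
    rw [mul_div_cancel₀ (α u) (ne_of_gt h1α)] at hkey
    nlinarith
  · -- no vertex with belief 1 wants to switch back
    intro x hbx
    have hxZ : x ∉ Z := by
      intro h
      rw [hbZ x h] at hbx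
      exact one_ne_zero hbx.symm
    have hxu : x ≠ u := fun h => hxZ (h ▸ mem_insert_self u Sᶜ)
    have hxS : x ∈ S := by
      by_contra h
      exact hxZ ((hmemZ x hxu).2 (mem_compl.2 h))
    set s : V → ℝ := Function.update b u 1 with hs
    set s' : V → ℝ := Function.update s x 0 with hs'
    have hsx : s x = 1 := by rw [hs, Function.update_of_ne hxu]; exact hbx
    have hs'x : s' x = 0 := Function.update_self x 0 s
    -- characterize s on other vertices
    have hsval : ∀ j, j ≠ u → s j = b j := fun j hj => Function.update_of_ne hj 1 b
    have hsS : ∀ j, j ∈ S → s j = 1 := by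
      intro j hj
      by_cases hju : j = u
      · rw [hju, hs]; exact Function.update_self u 1 b
      · rw [hsval j hju]; exact hbZ' j (fun h => (mem_compl.1 ((hmemZ j hju).1 h)) hj)
    have hsSc : ∀ j, j ∈ Sᶜ → s j = 0 := by
      intro j hj
      have hju : j ≠ u := fun h => huSc (h ▸ hj)
      rw [hsval j hju]
      exact hbZ j ((hmemZ j hju).2 hj)
    have hsum1 : ∑ j ∈ G.neighborFinset x, |s x - s j| = (nbrs G x Sᶜ : ℝ) := by
      have : ∀ j ∈ G.neighborFinset x, |s x - s j| = if j ∈ Sᶜ then 1 else 0 := by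
        intro j _
        rw [hsx]
        by_cases hjc : j ∈ Sᶜ
        · rw [if_pos hjc, hsSc j hjc]; norm_num
        · rw [if_neg hjc, hsS j (by simpa using hjc)]; norm_num
      rw [Finset.sum_congr rfl this, Finset.sum_boole, filter_nbhd]
      rfl
    have hsum2 : ∑ j ∈ G.neighborFinset x, |s' x - s' j| = (nbrs G x S : ℝ) := by
      have : ∀ j ∈ G.neighborFinset x, |s' x - s' j| = if j ∈ S then 1 else 0 := by
        intro j hj
        have hjx : j ≠ x := fun h => G.irrefl (h ▸ (G.mem_neighborFinset x j).1 hj)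
        rw [hs'x, hs', Function.update_of_ne hjx]
        by_cases hjs : j ∈ S
        · rw [if_pos hjs, hsS j hjs]; norm_num
        · rw [if_neg hjs, hsSc j (mem_compl.2 hjs)]; norm_num
      rw [Finset.sum_congr rfl this, Finset.sum_boole, filter_nbhd]
      rfl
    rw [hcost, hcost, hsum1, hsum2, hsx, hs'x, hbx]
    norm_num
    have h1α : (0:ℝ) < 1 - α x := by linarith [(hα x).2]
    have hfl : ((nbrs G x Sᶜ : ℤ) - (nbrs G x S : ℤ) : ℝ) ≤ α x / (1 - α x) := by
      have h2 : (nbrs G x Sᶜ : ℤ) - (nbrs G x S : ℤ) ≤ ⌊α x / (1 - α x)⌋ := by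
        rw [← ha x]
        have : defc G S x = (nbrs G x S : ℤ) - (nbrs G x Sᶜ : ℤ) := by
          rw [defc, if_pos hxS]
        have := hgood x hxS
        omega
      calc ((nbrs G x Sᶜ : ℤ) - (nbrs G x S : ℤ) : ℝ) ≤ (⌊α x / (1 - α x)⌋ : ℝ) := by
            exact_mod_cast h2
        _ ≤ α x / (1 - α x) := Int.floor_le _
    push_cast at hfl
    have hkey := mul_le_mul_of_nonneg_left hfl (le_of_lt h1α)
    rw [mul_div_cancel₀ (α x) (ne_of_gt h1α)] at hkey
    nlinarith
end
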